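/- Let ρ : (0,b) → ℝ be differentiable with ρ'(t) + ρ(t)² ≤ -κ for all t ∈ (0,b), where κ ∈ ℝ. Then ρ(t) ≤ ct_κ(t) on (0,b), and moreover b ≤ π_κ. -/

import Mathlib

open Set

noncomputable def ct (κ t : ℝ) : ℝ :=
  if 0 < κ then Real.sqrt κ * (Real.cos (Real.sqrt κ * t) / Real.sin (Real.sqrt κ * t))
  else if κ = 0 then 1 / t
  else Real.sqrt (-κ) * (Real.cosh (Real.sqrt (-κ) * t) / Real.sinh (Real.sqrt (-κ) * t))


lemma sinh_le_mul_cosh {a x : ℝ} (hx : 0 ≤ x) (hxa : x ≤ a) :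
    Real.sinh x ≤ x * Real.cosh a := by
  have hmono : MonotoneOn (fun y => y * Real.cosh a - Real.sinh y) (Icc 0 a) := by
    apply monotoneOn_of_deriv_nonneg (convex_Icc 0 a)
    · fun_prop
    · intro y hy
      exact ((hasDerivAt_id y).mul_const _ |>.sub (Real.hasDerivAt_sinh y)).differentiableAt.differentiableWithinAt
    · intro y hy
      rw [interior_Icc] at hy
      have hd : HasDerivAt (fun y => y * Real.cosh a - Real.sinh y)
          (1 * Real.cosh a - Real.cosh y) y :=
        ((hasDerivAt_id y).mul_const _).sub (Real.hasDerivAt_sinh y)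
      rw [hd.deriv]
      have : Real.cosh y ≤ Real.cosh a := by
        rw [Real.cosh_le_cosh, abs_of_nonneg hy.1.le, abs_of_nonneg (hy.1.le.trans hy.2.le)]
        exact hy.2.le
      linarith
  have h0 : (0:ℝ) ∈ Icc (0:ℝ) a := ⟨le_refl _, hx.trans hxa⟩
  have hxm : x ∈ Icc (0:ℝ) a := ⟨hx, hxa⟩
  have := hmono h0 hxm hx
  simp only [Real.sinh_zero, zero_mul, sub_zero] at this
  linarith

set_option maxHeartbeats 1000000 in
lemma riccati_core (κ b : ℝ) (ρ ρ' : ℝ → ℝ)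
    (hρ : ∀ t ∈ Ioo (0:ℝ) b, HasDerivAt ρ (ρ' t) t)
    (hineq : ∀ t ∈ Ioo (0:ℝ) b, ρ' t + ρ t ^ 2 ≤ -κ)
    (f f' : ℝ → ℝ)
    (hf : ∀ t, HasDerivAt f (f' t) t)
    (hf2 : ∀ t, HasDerivAt f' (-κ * f t) t)
    (t₀ : ℝ) (ht₀ : t₀ ∈ Ioo (0:ℝ) b)
    (hfpos : ∀ t ∈ Ioo (0:ℝ) t₀, 0 < f t)
    (hft₀ : 0 ≤ f t₀)
    (C : ℝ) (hCpos : 0 < C)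
    (hfC : ∀ t ∈ Ioc (0:ℝ) t₀, f t ≤ C * t) :
    ρ t₀ * f t₀ ≤ f' t₀ := by
  by_contra hcon
  push_neg at hcon
  obtain ⟨ht₀0, ht₀b⟩ := ht₀
  have hρc : ContinuousOn ρ (Ioo 0 b) := fun t ht => ((hρ t ht).continuousAt).continuousWithinAt
  set h : ℝ → ℝ := fun t => Real.exp (∫ s in t₀..t, ρ s) with hh_def
  have hhpos : ∀ t, 0 < h t := fun t => Real.exp_pos _
  have hh : ∀ t ∈ Ioo (0:ℝ) b, HasDerivAt h (ρ t * h t) t := by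
    intro t ht
    have hsub : uIcc t₀ t ⊆ Ioo (0:ℝ) b := by
      intro x hx
      rw [Set.mem_uIcc] at hx
      rcases hx with hx | hx
      · exact ⟨lt_of_lt_of_le ht₀0 hx.1, lt_of_le_of_lt hx.2 ht.2⟩
      · exact ⟨lt_of_lt_of_le ht.1 hx.1, lt_of_le_of_lt hx.2 ht₀b⟩
    have hint : IntervalIntegrable ρ MeasureTheory.volume t₀ t :=
      (hρc.mono hsub).intervalIntegrable
    have hmeas : StronglyMeasurableAtFilter ρ (nhds t) MeasureTheory.volume :=
      hρc.stronglyMeasurableAtFilter isOpen_Ioo t ht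
    have hI : HasDerivAt (fun u => ∫ s in t₀..u, ρ s) (ρ t) t :=
      intervalIntegral.integral_hasDerivAt_right hint hmeas (hρ t ht).continuousAt
    have := hI.exp
    simpa [hh_def, mul_comm] using this
  set E : ℝ → ℝ := fun t => h t * (ρ t * f t - f' t) with hE_def
  have hEderiv : ∀ t ∈ Ioo (0:ℝ) b,
      HasDerivAt E (h t * f t * (ρ' t + ρ t ^ 2 + κ)) t := by
    intro t ht
    have h1 := (hh t ht).mul (((hρ t ht).mul (hf t)).sub (hf2 t))
    refine h1.congr_deriv ?_
    simp only [Pi.sub_apply, Pi.mul_apply]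
    ring
  have hsubIoc : Ioc (0:ℝ) t₀ ⊆ Ioo 0 b := fun x hx => ⟨hx.1, lt_of_le_of_lt hx.2 ht₀b⟩
  have hanti : AntitoneOn E (Ioc 0 t₀) := by
    apply antitoneOn_of_deriv_nonpos (convex_Ioc 0 t₀)
    · intro x hx
      exact ((hEderiv x (hsubIoc hx)).continuousAt).continuousWithinAt
    · intro x hx
      rw [interior_Ioc] at hx
      exact ((hEderiv x (hsubIoc (Ioo_subset_Ioc_self hx))).differentiableAt).differentiableWithinAt
    · intro x hx
      rw [interior_Ioc] at hx
      have hx' := hsubIoc (Ioo_subset_Ioc_self hx)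
      rw [(hEderiv x hx').deriv]
      have hfx : 0 ≤ f x := (hfpos x hx).le
      have h1 := hineq x hx'
      have h2 : 0 ≤ h x * f x := mul_nonneg (hhpos x).le hfx
      nlinarith
  set c := E t₀ with hc_def
  have hcpos : 0 < c := mul_pos (hhpos t₀) (by linarith)
  set t₁ := t₀ / 2 with ht₁_def
  have ht₁0 : 0 < t₁ := half_pos ht₀0
  have ht₁t₀ : t₁ < t₀ := half_lt_self ht₀0
  have hEge : ∀ s ∈ Ioc (0:ℝ) t₁, c ≤ E s := by
    intro s hs
    exact hanti ⟨hs.1, hs.2.trans ht₁t₀.le⟩ ⟨ht₀0, le_refl _⟩ (hs.2.trans ht₁t₀.le)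
  set g : ℝ → ℝ := fun t => h t / f t + (c / C ^ 2) * t⁻¹ with hg_def
  have hgderiv : ∀ y ∈ Ioo (0:ℝ) t₀,
      HasDerivAt g (E y / (f y) ^ 2 + (c / C ^ 2) * (-(y ^ 2)⁻¹)) y := by
    intro y hy
    have hyb : y ∈ Ioo (0:ℝ) b := ⟨hy.1, hy.2.trans ht₀b⟩
    have hfy := hfpos y hy
    have hd1 : HasDerivAt (fun t => h t / f t)
        ((ρ y * h y * f y - h y * f' y) / (f y) ^ 2) y := (hh y hyb).div (hf y) hfy.ne'
    have hd2 : HasDerivAt (fun t : ℝ => (c / C ^ 2) * t⁻¹) ((c / C ^ 2) * (-(y ^ 2)⁻¹)) y :=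
      (hasDerivAt_inv hy.1.ne').const_mul _
    have := hd1.add hd2
    refine this.congr_deriv ?_
    simp only [hE_def]
    ring
  have hgmono : MonotoneOn g (Ioc 0 t₁) := by
    apply monotoneOn_of_deriv_nonneg (convex_Ioc 0 t₁)
    · intro x hx
      exact ((hgderiv x ⟨hx.1, lt_of_le_of_lt hx.2 ht₁t₀⟩).continuousAt).continuousWithinAt
    · intro x hx
      rw [interior_Ioc] at hx
      exact (hgderiv x ⟨hx.1, hx.2.trans ht₁t₀⟩).differentiableAt.differentiableWithinAt
    · intro x hx
      rw [interior_Ioc] at hx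
      rw [(hgderiv x ⟨hx.1, hx.2.trans ht₁t₀⟩).deriv]
      have hfx := hfpos x ⟨hx.1, hx.2.trans ht₁t₀⟩
      have hEx : c ≤ E x := hEge x (Ioo_subset_Ioc_self hx)
      have hfxC : f x ≤ C * x := hfC x ⟨hx.1, (hx.2.trans ht₁t₀).le⟩
      have hfx2 : (f x) ^ 2 ≤ (C * x) ^ 2 := by nlinarith
      have key : c / (C * x) ^ 2 ≤ E x / (f x) ^ 2 := by
        gcongr
        exact hcpos.le.trans hEx
      have heq : c / (C * x) ^ 2 = (c / C ^ 2) * (x ^ 2)⁻¹ := by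
        rw [mul_pow, div_mul_eq_div_div, div_eq_mul_inv]
      rw [heq] at key
      linarith
  set M := g t₁ with hM_def
  have hft₁ := hfpos t₁ ⟨ht₁0, ht₁t₀⟩
  have hMpos : 0 < M := by
    apply add_pos (div_pos (hhpos t₁) hft₁)
    exact mul_pos (div_pos hcpos (pow_pos hCpos 2)) (inv_pos.mpr ht₁0)
  set s := min t₁ (c / (C ^ 2 * M)) / 2 with hs_def
  have hq : 0 < c / (C ^ 2 * M) := div_pos hcpos (mul_pos (pow_pos hCpos 2) hMpos)
  have hs0 : 0 < s := half_pos (lt_min ht₁0 hq)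
  have hst₁ : s ≤ t₁ := by
    have : min t₁ (c / (C ^ 2 * M)) ≤ t₁ := min_le_left _ _
    linarith
  have h1 : g s ≤ M := hgmono ⟨hs0, hst₁⟩ ⟨ht₁0, le_refl _⟩ hst₁
  have hfs := hfpos s ⟨hs0, lt_of_le_of_lt hst₁ ht₁t₀⟩
  have h2 : (c / C ^ 2) * s⁻¹ < g s := by
    have : 0 < h s / f s := div_pos (hhpos s) hfs
    simp only [hg_def]
    linarith
  have hsM : s < c / (C ^ 2 * M) := by
    have : min t₁ (c / (C ^ 2 * M)) ≤ c / (C ^ 2 * M) := min_le_right _ _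
    linarith
  have h3 : M < (c / C ^ 2) * s⁻¹ := by
    have hsm : s * (C ^ 2 * M) < c := (lt_div_iff₀ (mul_pos (pow_pos hCpos 2) hMpos)).mp hsM
    rw [show (c / C ^ 2) * s⁻¹ = (c / C ^ 2) / s from (div_eq_mul_inv _ _).symm,
      lt_div_iff₀ hs0, lt_div_iff₀ (pow_pos hCpos 2)]
    nlinarith
  exact lt_irrefl M (h3.trans (lt_of_lt_of_le h2 h1))


theorem riccati_comparison_estimate_upper
    (κ b : ℝ) (hb : 0 < b) (ρ ρ' : ℝ → ℝ)
    (hρ : ∀ t ∈ Set.Ioo (0 : ℝ) b, HasDerivAt ρ (ρ' t) t)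
    (hineq : ∀ t ∈ Set.Ioo (0 : ℝ) b, ρ' t + (ρ t) ^ 2 ≤ -κ) :
    (∀ t ∈ Set.Ioo (0 : ℝ) b, ρ t ≤ ct κ t) ∧
      (0 < κ → b ≤ Real.pi / Real.sqrt κ) := by
  have part2 : 0 < κ → b ≤ Real.pi / Real.sqrt κ := by
    intro hκ
    by_contra hcon
    push_neg at hcon
    set a := Real.sqrt κ with ha_def
    have hsκ : 0 < a := Real.sqrt_pos.mpr hκ
    have haa : a ^ 2 = κ := Real.sq_sqrt hκ.le
    set t₀ := Real.pi / a with ht₀_def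
    have ht₀pos : 0 < t₀ := div_pos Real.pi_pos hsκ
    have hat₀ : a * t₀ = Real.pi := by
      rw [ht₀_def, mul_comm, div_mul_cancel₀ _ hsκ.ne']
    have hfd : ∀ t : ℝ, HasDerivAt (fun s => Real.sin (a * s)) (a * Real.cos (a * t)) t := by
      intro t
      have := ((hasDerivAt_id t).const_mul a).sin
      simp only [id_eq] at this
      convert this using 1
      ring
    have hfd2 : ∀ t : ℝ, HasDerivAt (fun s => a * Real.cos (a * s))
        (-κ * Real.sin (a * t)) t := by
      intro t
      have := (((hasDerivAt_id t).const_mul a).cos).const_mul a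
      simp only [id_eq] at this
      refine this.congr_deriv ?_
      rw [← haa]; ring
    have key := riccati_core κ b ρ ρ' hρ hineq
      (fun s => Real.sin (a * s)) (fun s => a * Real.cos (a * s)) hfd hfd2
      t₀ ⟨ht₀pos, hcon⟩
      (fun t ht => Real.sin_pos_of_pos_of_lt_pi (mul_pos hsκ ht.1)
        (by rw [← hat₀]; exact (mul_lt_mul_iff_right₀ hsκ).mpr ht.2))
      (by show (0:ℝ) ≤ Real.sin (a * t₀); rw [hat₀, Real.sin_pi])
      a hsκ
      (fun t ht => (Real.sin_le (mul_pos hsκ ht.1).le))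
    have key' : ρ t₀ * Real.sin (a * t₀) ≤ a * Real.cos (a * t₀) := key
    rw [hat₀, Real.sin_pi, Real.cos_pi] at key'
    nlinarith
  refine ⟨?_, part2⟩
  intro t ht
  rcases lt_trichotomy κ 0 with hκ | hκ | hκ
  · -- κ < 0
    set a := Real.sqrt (-κ) with ha_def
    have hsκ : 0 < a := Real.sqrt_pos.mpr (by linarith)
    have haa : a ^ 2 = -κ := Real.sq_sqrt (by linarith)
    have hfd : ∀ s : ℝ, HasDerivAt (fun u => Real.sinh (a * u)) (a * Real.cosh (a * s)) s := by
      intro s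
      have := ((hasDerivAt_id s).const_mul a).sinh
      simp only [id_eq] at this
      convert this using 1
      ring
    have hfd2 : ∀ s : ℝ, HasDerivAt (fun u => a * Real.cosh (a * u))
        (-κ * Real.sinh (a * s)) s := by
      intro s
      have := (((hasDerivAt_id s).const_mul a).cosh).const_mul a
      simp only [id_eq] at this
      refine this.congr_deriv ?_
      rw [← haa]; ring
    have key := riccati_core κ b ρ ρ' hρ hineq
      (fun u => Real.sinh (a * u)) (fun u => a * Real.cosh (a * u)) hfd hfd2
      t ht
      (fun s hs => Real.sinh_pos_iff.mpr (mul_pos hsκ hs.1))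
      (Real.sinh_nonneg_iff.mpr (mul_pos hsκ ht.1).le)
      (a * Real.cosh (a * t)) (mul_pos hsκ (Real.cosh_pos _))
      (by
        intro s hs
        have h1 : Real.sinh (a * s) ≤ (a * s) * Real.cosh (a * t) :=
          sinh_le_mul_cosh (mul_pos hsκ hs.1).le
            ((mul_le_mul_iff_right₀ hsκ).mpr hs.2)
        calc Real.sinh (a * s) ≤ (a * s) * Real.cosh (a * t) := h1
        _ = a * Real.cosh (a * t) * s := by ring)
    have hsh : 0 < Real.sinh (a * t) := Real.sinh_pos_iff.mpr (mul_pos hsκ ht.1)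
    have key' : ρ t * Real.sinh (a * t) ≤ a * Real.cosh (a * t) := key
    rw [ct, if_neg (by linarith), if_neg (by linarith), ← ha_def, mul_div_assoc']
    exact (le_div_iff₀ hsh).mpr key'
  · -- κ = 0
    subst hκ
    have hfd : ∀ s : ℝ, HasDerivAt (fun u : ℝ => u) ((fun _ : ℝ => (1:ℝ)) s) s :=
      fun s => hasDerivAt_id s
    have hfd2 : ∀ s : ℝ, HasDerivAt (fun _ : ℝ => (1:ℝ)) (-(0:ℝ) * s) s := by
      intro s
      simpa using hasDerivAt_const s (1:ℝ)
    have key := riccati_core 0 b ρ ρ' hρ hineq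
      (fun u : ℝ => u) (fun _ : ℝ => (1:ℝ)) hfd hfd2
      t ht (fun s hs => hs.1) ht.1.le 1 one_pos
      (fun s _ => by simp)
    have key' : ρ t * t ≤ 1 := key
    rw [ct, if_neg (lt_irrefl 0), if_pos rfl, le_div_iff₀ ht.1]
    exact key'
  · -- κ > 0
    have hbπ := part2 hκ
    set a := Real.sqrt κ with ha_def
    have hsκ : 0 < a := Real.sqrt_pos.mpr hκ
    have haa : a ^ 2 = κ := Real.sq_sqrt hκ.le
    have htπ : t < Real.pi / a := lt_of_lt_of_le ht.2 hbπ
    have hatπ : a * t < Real.pi := by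
      rw [lt_div_iff₀ hsκ] at htπ
      linarith [htπ]
    have hfd : ∀ s : ℝ, HasDerivAt (fun u => Real.sin (a * u)) (a * Real.cos (a * s)) s := by
      intro s
      have := ((hasDerivAt_id s).const_mul a).sin
      simp only [id_eq] at this
      convert this using 1
      ring
    have hfd2 : ∀ s : ℝ, HasDerivAt (fun u => a * Real.cos (a * u))
        (-κ * Real.sin (a * s)) s := by
      intro s
      have := (((hasDerivAt_id s).const_mul a).cos).const_mul a
      simp only [id_eq] at this
      refine this.congr_deriv ?_
      rw [← haa]; ring
    have key := riccati_core κ b ρ ρ' hρ hineq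
      (fun u => Real.sin (a * u)) (fun u => a * Real.cos (a * u)) hfd hfd2
      t ht
      (fun s hs => Real.sin_pos_of_pos_of_lt_pi (mul_pos hsκ hs.1)
        (lt_trans ((mul_lt_mul_iff_right₀ hsκ).mpr hs.2) hatπ))
      (Real.sin_pos_of_pos_of_lt_pi (mul_pos hsκ ht.1) hatπ).le
      a hsκ
      (fun s hs => Real.sin_le (mul_pos hsκ hs.1).le)
    have hsin : 0 < Real.sin (a * t) := Real.sin_pos_of_pos_of_lt_pi (mul_pos hsκ ht.1) hatπ
    have key' : ρ t * Real.sin (a * t) ≤ a * Real.cos (a * t) := key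
    rw [ct, if_pos hκ, ← ha_def, mul_div_assoc']
    exact (le_div_iff₀ hsin).mpr key'
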